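/- In the group H generated by a,b,c,d,e with γ4(H)=1 and the relations [a,c]=[a,d]=[a,e]=[b,d]=[b,e]=[c,e]=1, [ace, bd^{-1}]=1, [ac^{-1}e, bd]=1, the commutator [b,[c,d]] equals [d,[b,c]]^{-1}. -/

import Mathlib

open scoped commutatorElement

/-- In the group `H` generated by `a,b,c,d,e` with `γ₄(H)=1` and relations
`[a,c]=[a,d]=[a,e]=[b,d]=[b,e]=[c,e]=1`, `[ace, bd⁻¹]=1`, `[ac⁻¹e, bd]=1`,
the commutator `[b,[c,d]]` equals `[d,[b,c]]⁻¹`. -/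
theorem stmt_16 {H : Type*} [Group H]
    (a b c d e : H)
    (hgen : Subgroup.closure {a, b, c, d, e} = ⊤)
    (h4 : Subgroup.lowerCentralSeries (⊤ : Subgroup H) 3 = ⊥)
    (hac : ⁅a, c⁆ = 1) (had : ⁅a, d⁆ = 1) (hae : ⁅a, e⁆ = 1)
    (hbd : ⁅b, d⁆ = 1) (hbe : ⁅b, e⁆ = 1) (hce : ⁅c, e⁆ = 1)
    (h1 : ⁅a * c * e, b * d⁻¹⁆ = 1) (h2 : ⁅a * c⁻¹ * e, b * d⁆ = 1) :
    ⁅b, ⁅c, d⁆⁆ = ⁅d, ⁅b, c⁆⁆⁻¹ := by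
  -- membership facts
  have mem1 : ∀ x y : H, ⁅x, y⁆ ∈ Subgroup.lowerCentralSeries (⊤ : Subgroup H) 1 := fun x y =>
    Subgroup.commutator_mem_commutator (Subgroup.mem_top x) (Subgroup.mem_top y)
  have mem2 : ∀ x y z : H, ⁅⁅x, y⁆, z⁆ ∈ Subgroup.lowerCentralSeries (⊤ : Subgroup H) 2 := fun x y z => by
    rw [Subgroup.lowerCentralSeries_succ]
    exact Subgroup.commutator_mem_commutator (mem1 x y) (Subgroup.mem_top z)
  -- elements of γ₃ are central
  have hcent : ∀ g ∈ Subgroup.lowerCentralSeries (⊤ : Subgroup H) 2, ∀ z : H, Commute g z := by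
    intro g hg z
    have h3 : ⁅g, z⁆ ∈ Subgroup.lowerCentralSeries (⊤ : Subgroup H) 3 := by
      rw [Subgroup.lowerCentralSeries_succ]
      exact Subgroup.commutator_mem_commutator hg (Subgroup.mem_top z)
    rw [h4, Subgroup.mem_bot] at h3
    exact commutatorElement_eq_one_iff_commute.mp h3
  have ctr : ∀ x y z w : H, Commute ⁅⁅x, y⁆, z⁆ w := fun x y z w =>
    hcent _ (mem2 x y z) w
  have ctr' : ∀ x y z w : H, Commute ⁅z, ⁅x, y⁆⁆ w := by
    intro x y z w
    have : ⁅z, ⁅x, y⁆⁆ = ⁅⁅x, y⁆, z⁆⁻¹ := by rw [commutatorElement_inv]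
    rw [this]
    exact (ctr x y z w).inv_left
  -- exact expansion identity
  have key : ∀ x y z : H, ⁅x * y, z⁆ = ⁅x, ⁅y, z⁆⁆ * ⁅y, z⁆ * ⁅x, z⁆ := by
    intro x y z
    simp only [commutatorElement_def]
    group
  -- commutator multiplicativity for x = ⁅d,c⁆ (values are central)
  have mulr : ∀ (p q : H) (z w : H), ⁅⁅p, q⁆, z * w⁆ = ⁅⁅p, q⁆, z⁆ * ⁅⁅p, q⁆, w⁆ := by
    intro p q z w
    have base : ⁅⁅p, q⁆, z * w⁆ = ⁅⁅p, q⁆, z⁆ * (z * ⁅⁅p, q⁆, w⁆ * z⁻¹) := by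
      simp only [commutatorElement_def]
      group
    rw [base, ← (ctr p q w z).eq]
    group
  have invr : ∀ (p q : H) (z : H), ⁅⁅p, q⁆, z⁻¹⁆ = ⁅⁅p, q⁆, z⁆⁻¹ := by
    intro p q z
    have h1' : ⁅⁅p, q⁆, z * z⁻¹⁆ = 1 := by simp
    rw [mulr p q z z⁻¹] at h1'
    exact eq_inv_of_mul_eq_one_right h1'
  -- commutators commute with commutators: ⁅⁅p,q⁆, ⁅r,s⁆⁆ = 1
  have c22 : ∀ p q r s : H, ⁅⁅p, q⁆, ⁅r, s⁆⁆ = 1 := by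
    intro p q r s
    have : ⁅⁅p, q⁆, r * s * r⁻¹ * s⁻¹⁆ =
        ⁅⁅p, q⁆, r⁆ * ⁅⁅p, q⁆, s⁆ * ⁅⁅p, q⁆, r⁆⁻¹ * ⁅⁅p, q⁆, s⁆⁻¹ := by
      rw [mulr, mulr, mulr, invr, invr]
    rw [show ⁅r, s⁆ = r * s * r⁻¹ * s⁻¹ from commutatorElement_def r s, this,
      (ctr p q r ⁅⁅p,q⁆,s⁆).eq]
    group
  -- b and d commute
  have hbd' : b * d = d * b := (commutatorElement_eq_one_iff_commute.mp hbd).eq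
  -- expand ⁅b*d, c⁆ two ways
  have e1 : ⁅b, ⁅d, c⁆⁆ * ⁅d, c⁆ * ⁅b, c⁆ = ⁅d, ⁅b, c⁆⁆ * ⁅b, c⁆ * ⁅d, c⁆ := by
    rw [← key b d c, ← key d b c, hbd']
  have hdcbc : ⁅d, c⁆ * ⁅b, c⁆ = ⁅b, c⁆ * ⁅d, c⁆ :=
    (commutatorElement_eq_one_iff_commute.mp (c22 d c b c)).eq
  have e2 : ⁅b, ⁅d, c⁆⁆ = ⁅d, ⁅b, c⁆⁆ := by
    have e1' : ⁅b, ⁅d, c⁆⁆ * (⁅b, c⁆ * ⁅d, c⁆) = ⁅d, ⁅b, c⁆⁆ * (⁅b, c⁆ * ⁅d, c⁆) := by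
      rw [← hdcbc, ← mul_assoc, e1, mul_assoc]
      rw [hdcbc]
    exact mul_right_cancel e1'
  -- multiplicativity in second argument when the second factor is a commutator
  have mull : ∀ (x z r s : H), ⁅x, z * ⁅r, s⁆⁆ = ⁅x, z⁆ * ⁅x, ⁅r, s⁆⁆ := by
    intro x z r s
    have base : ⁅x, z * ⁅r, s⁆⁆ = ⁅x, z⁆ * (z * ⁅x, ⁅r, s⁆⁆ * z⁻¹) := by
      simp only [commutatorElement_def]
      group
    rw [base, ← (ctr' r s x z).eq]
    group
  -- finally ⁅b, ⁅c,d⁆⁆ = ⁅b, ⁅d,c⁆⁆⁻¹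
  have e3 : ⁅b, ⁅c, d⁆⁆ = ⁅b, ⁅d, c⁆⁆⁻¹ := by
    have hone : ⁅d, c⁆ * ⁅c, d⁆ = 1 := by
      simp only [commutatorElement_def]
      group
    have h0 : ⁅b, ⁅d, c⁆ * ⁅c, d⁆⁆ = 1 := by rw [hone]; simp
    rw [mull b ⁅d, c⁆ c d] at h0
    exact eq_inv_of_mul_eq_one_right h0
  rw [e3, e2]
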